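/- Let Γ be a finite connected G-vertex-transitive graph of valency 4 such that the local group G_v^{Γ(v)} is isomorphic to Sym(3) (acting with orbits of sizes 1 and 3 on Γ(v)). Then for each vertex u there is a unique neighbour u' fixed by G_u, and the relation u ↦ u' satisfies G_u = G_{u'} and (u')' = u; consequently M = {{u, u'} : u ∈ V(Γ)} is a G-invariant perfect matching of Γ. -/

import Mathlib

theorem stmt_19 {V : Type*} [Fintype V] [DecidableEq V]
    (Γ : SimpleGraph V) [DecidableRel Γ.Adj]
    (hconn : Γ.Connected)
    (hval : ∀ v : V, Γ.degree v = 4)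
    (G : Subgroup (Equiv.Perm V))
    -- G consists of automorphisms of Γ:
    (hG : ∀ g ∈ G, ∀ u w : V, Γ.Adj u w ↔ Γ.Adj (g u) (g w))
    -- G is vertex-transitive:
    (htrans : ∀ a b : V, ∃ g ∈ G, g a = b)
    -- the local group G_v^{Γ(v)} is Sym(3), acting with orbits of sizes 1 and 3;
    -- here L v denotes the set of permutations of Γ(v) induced by elements of G_v:
    (hlocal : ∀ v : V,
      ∃ w : {u : V // Γ.Adj v u},
        (∀ e : Equiv.Perm {u : V // Γ.Adj v u},
          (∃ g ∈ G, g v = v ∧ ∀ u : {u : V // Γ.Adj v u}, (e u : V) = g (u : V)) →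
            e w = w) ∧
        (∀ u₁ u₂ : {u : V // Γ.Adj v u}, u₁ ≠ w → u₂ ≠ w →
          ∃ e : Equiv.Perm {u : V // Γ.Adj v u},
            (∃ g ∈ G, g v = v ∧ ∀ u : {u : V // Γ.Adj v u}, (e u : V) = g (u : V)) ∧
            e u₁ = u₂) ∧
        Nat.card {e : Equiv.Perm {u : V // Γ.Adj v u} //
          ∃ g ∈ G, g v = v ∧ ∀ u : {u : V // Γ.Adj v u}, (e u : V) = g (u : V)} = 6) :
    -- conclusion: u ↦ u' is a well-defined map giving a G-invariant perfect matching
    ∃ f : V → V, ∀ u : V,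
      Γ.Adj u (f u) ∧
      (∀ g ∈ G, g u = u → g (f u) = f u) ∧
      -- f u is the unique neighbour of u fixed by G_u:
      (∀ w : V, Γ.Adj u w → (∀ g ∈ G, g u = u → g w = w) → w = f u) ∧
      f (f u) = u ∧
      -- G_u = G_{u'}:
      (∀ g ∈ G, (g u = u ↔ g (f u) = f u)) ∧
      -- the matching M = {{u, f u}} is G-invariant:
      (∀ g ∈ G, f (g u) = g (f u)) := by
  classical
  set f : V → V := fun v => ((hlocal v).choose : {u : V // Γ.Adj v u}).val with hf
  have hadj : ∀ v, Γ.Adj v (f v) := fun v => ((hlocal v).choose).prop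
  -- every element of G_v fixes f v
  have hfix : ∀ v, ∀ g ∈ G, g v = v → g (f v) = f v := by
    intro v g hg hv
    have hp : ∀ u : V, Γ.Adj v u ↔ Γ.Adj v (g u) := by
      intro u
      conv_lhs => rw [hG g hg v u, hv]
    have := (hlocal v).choose_spec.1 ((g : Equiv.Perm V).subtypePerm (fun u => (hp u).symm))
      ⟨g, hg, hv, fun u => rfl⟩
    exact congrArg Subtype.val this
  -- uniqueness of the fixed neighbour
  have huniq : ∀ v w, Γ.Adj v w → (∀ g ∈ G, g v = v → g w = w) → w = f v := by
    intro v w hw hfixw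
    by_contra hne
    have hcard : Fintype.card {u : V // Γ.Adj v u} = 4 := by
      rw [← hval v, ← SimpleGraph.card_neighborSet_eq_degree]
      exact Fintype.card_congr (Equiv.subtypeEquivRight fun u =>
        (Γ.mem_neighborSet v u).symm)
    have hpos : (Finset.univ \ {(hlocal v).choose, (⟨w, hw⟩ : {u : V // Γ.Adj v u})} :
        Finset {u : V // Γ.Adj v u}).Nonempty := by
      rw [← Finset.card_pos, Finset.card_sdiff_of_subset (Finset.subset_univ _), Finset.card_univ,
        hcard]
      have h2 : ({(hlocal v).choose, ⟨w, hw⟩} : Finset {u : V // Γ.Adj v u}).card ≤ 2 :=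
        (Finset.card_insert_le _ _).trans (by simp)
      omega
    obtain ⟨u₂, hu₂⟩ := hpos
    simp only [Finset.mem_sdiff, Finset.mem_insert, Finset.mem_singleton,
      Finset.mem_univ, true_and, not_or] at hu₂
    have hwne : (⟨w, hw⟩ : {u : V // Γ.Adj v u}) ≠ (hlocal v).choose := by
      intro h
      exact hne (congrArg Subtype.val h)
    obtain ⟨e, ⟨g, hg, hgv, hcomm⟩, he⟩ :=
      (hlocal v).choose_spec.2.1 ⟨w, hw⟩ u₂ hwne hu₂.1
    have hgw : g w = (u₂ : V) := by
      have := hcomm ⟨w, hw⟩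
      rw [← this, he]
    have : (u₂ : V) = w := by rw [← hgw, hfixw g hg hgv]
    exact hu₂.2 (Subtype.ext this)
  -- G_u ⊆ G_{f u} and equality by a conjugation counting argument
  have hstab : ∀ u : V, ∀ g ∈ G, g (f u) = f u → g u = u := by
    intro u
    obtain ⟨t, ht, htu⟩ := htrans u (f u)
    set Su : Set (Equiv.Perm V) := {g | g ∈ G ∧ g u = u} with hSu
    set Su' : Set (Equiv.Perm V) := {g | g ∈ G ∧ g (f u) = f u} with hSu'
    have hsub : Su ⊆ Su' := fun g hgmem => ⟨hgmem.1, hfix u g hgmem.1 hgmem.2⟩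
    have hle : Su'.ncard ≤ Su.ncard := by
      apply Set.ncard_le_ncard_of_injOn (fun g => t⁻¹ * g * t)
      · rintro g ⟨hg, hgu'⟩
        refine ⟨G.mul_mem (G.mul_mem (G.inv_mem ht) hg) ht, ?_⟩
        show t⁻¹ (g (t u)) = u
        rw [htu, hgu', ← htu, Equiv.Perm.inv_def, Equiv.symm_apply_apply]
      · intro a _ b _ hab
        have : t⁻¹ * a * t = t⁻¹ * b * t := hab
        have h2 : t⁻¹ * a = t⁻¹ * b := mul_right_cancel this
        exact mul_left_cancel h2
    have heq : Su = Su' := Set.eq_of_subset_of_ncard_le hsub hle (Set.toFinite _)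
    intro g hg hgu'
    have hmem : g ∈ Su := heq ▸ (show g ∈ Su' from ⟨hg, hgu'⟩)
    exact hmem.2
  have hinvol : ∀ u, f (f u) = u := by
    intro u
    exact (huniq (f u) u (hadj u).symm (fun g hg hgfu => hstab u g hg hgfu)).symm
  have hequiv : ∀ u : V, ∀ g ∈ G, f (g u) = g (f u) := by
    intro u g hg
    have hadj' : Γ.Adj (g u) (g (f u)) := (hG g hg u (f u)).mp (hadj u)
    refine (huniq (g u) (g (f u)) hadj' ?_).symm
    intro h hh hhgu
    have hmem : g⁻¹ * h * g ∈ G := G.mul_mem (G.mul_mem (G.inv_mem hg) hh) hg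
    have hfixu : (g⁻¹ * h * g) u = u := by
      show g⁻¹ (h (g u)) = u
      rw [hhgu, Equiv.Perm.inv_def, Equiv.symm_apply_apply]
    have := hfix u (g⁻¹ * h * g) hmem hfixu
    have h2 : g⁻¹ (h (g (f u))) = f u := this
    calc h (g (f u)) = g (g⁻¹ (h (g (f u)))) := by
          rw [Equiv.Perm.inv_def, Equiv.apply_symm_apply]
      _ = g (f u) := by rw [h2]
  exact ⟨f, fun u =>
    ⟨hadj u, fun g hg => hfix u g hg, fun w hw hfw => huniq u w hw hfw,
      hinvol u, fun g hg => ⟨hfix u g hg, hstab u g hg⟩, fun g hg => hequiv u g hg⟩⟩
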